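/- Let N be a positive integer, and let A, B, I be the matrices defined as usual. Then both matrices I + A and I − B are positive definite. -/

import Mathlib

open Polynomial Chebyshev

/-- Evaluation of the Chebyshev polynomial of the second kind. -/
noncomputable def Ucheb (n : ℤ) (x : ℝ) : ℝ := (Polynomial.Chebyshev.U ℝ n).eval x

/-- Evaluation of the derivative of the Chebyshev polynomial of the second kind. -/
noncomputable def Ucheb' (n : ℤ) (x : ℝ) : ℝ :=
  (Polynomial.derivative (Polynomial.Chebyshev.U ℝ n)).eval x

/-- The N×N matrix with entries 1/2 on the first off-diagonals and 0 elsewhere. -/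
noncomputable def matA (N : ℕ) : Matrix (Fin N) (Fin N) ℝ :=
  fun i j => if ((i : ℤ) - (j : ℤ)).natAbs = 1 then 1/2 else 0

/-- The N×N matrix with entries 1/2 on the second off-diagonals and 0 elsewhere. -/
noncomputable def matB (N : ℕ) : Matrix (Fin N) (Fin N) ℝ :=
  fun i j => if ((i : ℤ) - (j : ℤ)).natAbs = 2 then 1/2 else 0

open Finset Matrix

-- split of sum of squares
lemma split_sq (d N : ℕ) (y : ℕ → ℝ) :
    ∑ i ∈ range N, y i ^ 2
      = ∑ i ∈ range (min d N), y i ^ 2 + ∑ i ∈ range (N - d), y (i + d) ^ 2 := by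
  rcases le_or_gt N d with h | h
  · simp [Nat.sub_eq_zero_of_le h, min_eq_right h]
  · rw [min_eq_left h.le]
    have h1 : ∑ i ∈ range (N - d), y (i + d) ^ 2 = ∑ i ∈ Finset.Ico d N, y i ^ 2 := by
      rw [Finset.sum_Ico_eq_sum_range]
      exact Finset.sum_congr rfl fun i _ => by rw [Nat.add_comm]
    rw [h1, Finset.range_eq_Ico, ← Finset.sum_Ico_consecutive _ (Nat.zero_le d) h.le,
      ← Finset.range_eq_Ico]

lemma sos (d N : ℕ) (s : ℝ) (hs : s = 1 ∨ s = -1) (y : ℕ → ℝ) :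
    ∑ i ∈ range N, y i ^ 2 + s * ∑ i ∈ range (N - d), y i * y (i + d)
      = (1/2) * ∑ i ∈ range (N - d), (y i + s * y (i + d)) ^ 2
        + (1/2) * ∑ i ∈ range (min d N), y i ^ 2
        + (1/2) * ∑ i ∈ Finset.Ico (N - d) N, y i ^ 2 := by
  have hs2 : s * s = 1 := by rcases hs with rfl | rfl <;> norm_num
  have e1 : ∑ i ∈ range (N - d), (y i + s * y (i + d)) ^ 2
      = ∑ i ∈ range (N - d), y i ^ 2
        + 2 * s * ∑ i ∈ range (N - d), y i * y (i + d)
        + ∑ i ∈ range (N - d), y (i + d) ^ 2 := by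
    rw [Finset.mul_sum, ← Finset.sum_add_distrib, ← Finset.sum_add_distrib]
    refine Finset.sum_congr rfl fun i _ => ?_
    have : (y i + s * y (i + d)) ^ 2
        = y i ^ 2 + 2 * s * (y i * y (i + d)) + (s * s) * y (i + d) ^ 2 := by ring
    rw [this, hs2]; ring
  have e2 := split_sq d N y
  have e3 : ∑ i ∈ range (N - d), y i ^ 2 + ∑ i ∈ Finset.Ico (N - d) N, y i ^ 2
      = ∑ i ∈ range N, y i ^ 2 := by
    rw [Finset.range_eq_Ico, Finset.range_eq_Ico]
    exact Finset.sum_Ico_consecutive (f := fun i => y i ^ 2) (Nat.zero_le _) (Nat.sub_le _ _)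
  linarith

lemma dsum (d N : ℕ) (hd : 0 < d) (y : ℕ → ℝ) :
    ∑ i ∈ range N, ∑ j ∈ range N,
        (if (((i : ℤ) - (j : ℤ)).natAbs = d) then (1:ℝ)/2 else 0) * (y i * y j)
      = ∑ i ∈ range (N - d), y i * y (i + d) := by
  have hsplit : ∀ i j : ℕ,
      (if (((i : ℤ) - (j : ℤ)).natAbs = d) then (1:ℝ)/2 else 0) * (y i * y j)
        = (if j = i + d then (1/2) * (y i * y j) else 0)
          + (if i = j + d then (1/2) * (y i * y j) else 0) := by
    intro i j
    split_ifs <;> try ring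
    all_goals (exfalso; omega)
  have hfilter : ∀ g : ℕ → ℝ,
      (∑ i ∈ range N, if i + d < N then g i else 0) = ∑ i ∈ range (N - d), g i := by
    intro g
    rw [← Finset.sum_filter]
    refine Finset.sum_congr ?_ fun _ _ => rfl
    ext i
    simp only [Finset.mem_filter, Finset.mem_range]
    omega
  calc ∑ i ∈ range N, ∑ j ∈ range N,
        (if (((i : ℤ) - (j : ℤ)).natAbs = d) then (1:ℝ)/2 else 0) * (y i * y j)
      = ∑ i ∈ range N, ∑ j ∈ range N,
          ((if j = i + d then (1/2) * (y i * y j) else 0)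
            + (if i = j + d then (1/2) * (y i * y j) else 0)) := by
        exact Finset.sum_congr rfl fun i _ => Finset.sum_congr rfl fun j _ => hsplit i j
    _ = (∑ i ∈ range N, ∑ j ∈ range N, (if j = i + d then (1/2) * (y i * y j) else 0))
        + ∑ i ∈ range N, ∑ j ∈ range N, (if i = j + d then (1/2) * (y i * y j) else 0) := by
        rw [← Finset.sum_add_distrib]
        exact Finset.sum_congr rfl fun i _ => Finset.sum_add_distrib
    _ = (∑ i ∈ range N, if i + d < N then (1/2) * (y i * y (i + d)) else 0)
        + ∑ j ∈ range N, if j + d < N then (1/2) * (y (j + d) * y j) else 0 := by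
        rw [Finset.sum_comm (s := range N) (t := range N)
          (f := fun i j => (if i = j + d then (1/2) * (y i * y j) else 0))]
        congr 1
        · refine Finset.sum_congr rfl fun i _ => ?_
          rw [Finset.sum_ite_eq' (range N) (i + d) (fun j => (1/2) * (y i * y j))]
          simp [Finset.mem_range]
        · refine Finset.sum_congr rfl fun j _ => ?_
          rw [Finset.sum_ite_eq' (range N) (j + d) (fun i => (1/2) * (y i * y j))]
          simp [Finset.mem_range]
    _ = ∑ i ∈ range (N - d), y i * y (i + d) := by
        rw [hfilter, hfilter, ← Finset.sum_add_distrib]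
        exact Finset.sum_congr rfl fun i _ => by ring

lemma quad (d N : ℕ) (hd : 0 < d) (s : ℝ) (y : ℕ → ℝ) :
    ∑ i ∈ range N, ∑ j ∈ range N,
        y i * (((if i = j then (1:ℝ) else 0)
          + s * (if (((i : ℤ) - (j : ℤ)).natAbs = d) then (1:ℝ)/2 else 0)) * y j)
      = ∑ i ∈ range N, y i ^ 2 + s * ∑ i ∈ range (N - d), y i * y (i + d) := by
  have step : ∀ i ∈ range N, ∀ j ∈ range N,
      y i * (((if i = j then (1:ℝ) else 0)
          + s * (if (((i : ℤ) - (j : ℤ)).natAbs = d) then (1:ℝ)/2 else 0)) * y j)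
      = (if i = j then y i * y j else 0)
        + s * ((if (((i : ℤ) - (j : ℤ)).natAbs = d) then (1:ℝ)/2 else 0) * (y i * y j)) := by
    intro i _ j _
    split_ifs <;> ring
  rw [Finset.sum_congr rfl fun i hi => Finset.sum_congr rfl fun j hj => step i hi j hj]
  have e1 : ∀ i ∈ range N,
      (∑ j ∈ range N, ((if i = j then y i * y j else 0)
        + s * ((if (((i : ℤ) - (j : ℤ)).natAbs = d) then (1:ℝ)/2 else 0) * (y i * y j))))
      = (if i ∈ range N then y i * y i else 0)
        + s * ∑ j ∈ range N, ((if (((i : ℤ) - (j : ℤ)).natAbs = d) then (1:ℝ)/2 else 0) * (y i * y j)) := by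
    intro i hi
    rw [Finset.sum_add_distrib, ← Finset.mul_sum]
    congr 1
    exact Finset.sum_ite_eq (range N) i (fun j => y i * y j)
  rw [Finset.sum_congr rfl e1, Finset.sum_add_distrib, ← Finset.mul_sum, dsum d N hd y]
  congr 1
  exact Finset.sum_congr rfl fun i hi => by rw [if_pos hi]; ring

lemma quad_pos (d N : ℕ) (hd : 0 < d) (s : ℝ) (hs : s = 1 ∨ s = -1) (y : ℕ → ℝ)
    (hz : ∃ k, k < N ∧ y k ≠ 0) :
    0 < ∑ i ∈ range N, y i ^ 2 + s * ∑ i ∈ range (N - d), y i * y (i + d) := by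
  rw [sos d N s hs y]
  set S1 := ∑ i ∈ range (N - d), (y i + s * y (i + d)) ^ 2 with hS1
  set S2 := ∑ i ∈ range (min d N), y i ^ 2 with hS2
  set S3 := ∑ i ∈ Finset.Ico (N - d) N, y i ^ 2 with hS3
  have h1 : 0 ≤ S1 := Finset.sum_nonneg fun i _ => sq_nonneg _
  have h2 : 0 ≤ S2 := Finset.sum_nonneg fun i _ => sq_nonneg _
  have h3 : 0 ≤ S3 := Finset.sum_nonneg fun i _ => sq_nonneg _
  by_contra hc
  push_neg at hc
  have hS1z : S1 = 0 := by linarith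
  have hS2z : S2 = 0 := by linarith
  have key1 : ∀ i < N - d, y i + s * y (i + d) = 0 := by
    intro i hi
    have h := (Finset.sum_eq_zero_iff_of_nonneg
      (fun j (_ : j ∈ range (N - d)) => sq_nonneg (y j + s * y (j + d)))).mp hS1z i
      (Finset.mem_range.mpr hi)
    exact pow_eq_zero_iff two_ne_zero |>.mp h
  have key2 : ∀ i < min d N, y i = 0 := by
    intro i hi
    have h := (Finset.sum_eq_zero_iff_of_nonneg
      (fun j (_ : j ∈ range (min d N)) => sq_nonneg (y j))).mp hS2z i (Finset.mem_range.mpr hi)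
    exact pow_eq_zero_iff two_ne_zero |>.mp h
  have hall : ∀ k, k < N → y k = 0 := by
    intro k
    induction k using Nat.strong_induction_on with
    | _ k ih =>
      intro hk
      rcases lt_or_ge k d with h | h
      · exact key2 k (lt_min h hk)
      · have hkd : k - d < N - d := by omega
        have hy : y (k - d) = 0 := ih (k - d) (by omega) (by omega)
        have := key1 (k - d) hkd
        rw [Nat.sub_add_cancel h] at this
        rcases hs with rfl | rfl <;> linarith
  obtain ⟨k, hk, hyk⟩ := hz
  exact hyk (hall k hk)


lemma main_posdef (N d : ℕ) (hd : 0 < d) (s : ℝ) (hs : s = 1 ∨ s = -1)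
    (M : Matrix (Fin N) (Fin N) ℝ)
    (hM : ∀ i j : Fin N, M i j
      = (if i = j then (1:ℝ) else 0)
        + s * (if ((((i:ℕ) : ℤ) - ((j:ℕ) : ℤ)).natAbs = d) then (1:ℝ)/2 else 0)) :
    M.PosDef := by
  rw [Matrix.posDef_iff_dotProduct_mulVec]
  constructor
  · show M.conjTranspose = M
    ext i j
    simp only [Matrix.conjTranspose_apply, hM, star_trivial]
    have h1 : (j = i) ↔ (i = j) := eq_comm
    have h2 : (((j:ℕ):ℤ) - ((i:ℕ):ℤ)).natAbs = (((i:ℕ):ℤ) - ((j:ℕ):ℤ)).natAbs := by omega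
    rw [if_congr h1 rfl rfl, h2]
  · intro x hx
    classical
    set y : ℕ → ℝ := fun k => if h : k < N then x ⟨k, h⟩ else 0 with hy
    have hxy : ∀ i : Fin N, x i = y (i : ℕ) := by
      intro i
      simp [hy, i.isLt]
    have hconv : star x ⬝ᵥ M *ᵥ x
        = ∑ i ∈ range N, ∑ j ∈ range N,
            y i * (((if i = j then (1:ℝ) else 0)
              + s * (if (((i : ℤ) - (j : ℤ)).natAbs = d) then (1:ℝ)/2 else 0)) * y j) := by
      have hstar : star x = x := star_trivial x
      rw [hstar]
      have inner : ∀ i : Fin N, (M *ᵥ x) i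
          = ∑ j ∈ range N, (((if (i:ℕ) = j then (1:ℝ) else 0)
              + s * (if ((((i:ℕ):ℤ) - (j : ℤ)).natAbs = d) then (1:ℝ)/2 else 0)) * y j) := by
        intro i
        show ∑ j : Fin N, M i j * x j = _
        rw [← Fin.sum_univ_eq_sum_range (fun j => (((if (i:ℕ) = j then (1:ℝ) else 0)
              + s * (if ((((i:ℕ):ℤ) - (j : ℤ)).natAbs = d) then (1:ℝ)/2 else 0)) * y j)) N]
        refine Finset.sum_congr rfl fun j _ => ?_
        rw [hM i j, hxy j]
        congr 2
        · exact if_congr Fin.ext_iff rfl rfl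
      show ∑ i : Fin N, x i * (M *ᵥ x) i = _
      rw [← Fin.sum_univ_eq_sum_range (fun i => ∑ j ∈ range N,
            y i * (((if i = j then (1:ℝ) else 0)
              + s * (if (((i : ℤ) - (j : ℤ)).natAbs = d) then (1:ℝ)/2 else 0)) * y j)) N]
      refine Finset.sum_congr rfl fun i _ => ?_
      rw [inner i, hxy i, Finset.mul_sum]
    rw [hconv, quad d N hd s y]
    apply quad_pos d N hd s hs y
    obtain ⟨i, hi⟩ := Function.ne_iff.mp hx
    exact ⟨(i : ℕ), i.isLt, by rw [← hxy i]; exact hi⟩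


theorem stmt2 (N : ℕ) (hN : 0 < N) :
    ((1 : Matrix (Fin N) (Fin N) ℝ) + matA N).PosDef
      ∧ ((1 : Matrix (Fin N) (Fin N) ℝ) - matB N).PosDef := by
  have hc : ∀ k : Fin N, (k : ℤ) = ((k : ℕ) : ℤ) := fun k => by norm_cast
  constructor
  · apply main_posdef N 1 one_pos 1 (Or.inl rfl)
    intro i j
    simp only [Matrix.add_apply, Matrix.one_apply, matA, hc, one_mul]
  · apply main_posdef N 2 two_pos (-1) (Or.inr rfl)
    intro i j
    simp only [Matrix.sub_apply, Matrix.one_apply, matB, hc]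
    ring
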